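/- Let X be a locally connected space. For any cosheaf Q on X and any abelian group G there is a natural isomorphism Hom_Coshv(Q, G^cos) ≅ Hom_Ab(Q(X), G); i.e. the constant-cosheaf functor G ↦ G^cos is right adjoint to global sections of cosheaves Q ↦ Q(X). -/

import Mathlib

open CategoryTheory CategoryTheory.Limits TopologicalSpace Opposite

noncomputable section

abbrev Shv (X : TopCat.{u}) := TopCat.Sheaf AddCommGrpCat.{u} X

variable {X : TopCat.{u}}

/-- connected nonempty opens contained in `U` -/
abbrev ConnIn (X : TopCat.{u}) (U : Opens X) : Type u :=
  ObjectProperty.FullSubcategory (fun W : Opens X => W ≤ U ∧ (W : Set X).Nonempty ∧ IsConnected (W : Set X))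

def dgm (F : Shv X) (U : Opens X) : (ConnIn X U)ᵒᵖ ⥤ AddCommGrpCat.{u} :=
  (ObjectProperty.ι _).op ⋙ F.val

def connInMap {V U : Opens X} (h : V ≤ U) : ConnIn X V ⥤ ConnIn X U :=
  ObjectProperty.ιOfLE (fun W hw => ⟨le_trans hw.1 h, hw.2⟩)

/-- The associated precosheaf of a sheaf `F`:
`cos(F)(U) = L(U, F|_U) = colim_{W ⊆ U connected nonempty} F(W)`. -/
def cosPre (F : Shv X) : Opens X ⥤ AddCommGrpCat.{u} where
  obj U := colimit (dgm F U)
  map {V U} h := colimit.pre (dgm F U) (connInMap h.le).op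
  map_id U := by
    refine colimit.hom_ext (F := dgm F U) ?_
    intro j
    rw [Category.comp_id]
    exact colimit.ι_pre (dgm F U) (connInMap le_rfl).op j
  map_comp {V W U} h h' := by
    refine colimit.hom_ext (F := dgm F V) ?_
    intro j
    have A : colimit.ι (dgm F V) j ≫ colimit.pre (dgm F U) (connInMap (leOfHom (h ≫ h'))).op =
        colimit.ι (dgm F U) ((connInMap (leOfHom (h ≫ h'))).op.obj j) :=
      colimit.ι_pre (dgm F U) (connInMap (leOfHom (h ≫ h'))).op j
    have B : colimit.ι (dgm F V) j ≫ colimit.pre (dgm F W) (connInMap (leOfHom h)).op =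
        colimit.ι (dgm F W) ((connInMap (leOfHom h)).op.obj j) :=
      colimit.ι_pre (dgm F W) (connInMap (leOfHom h)).op j
    have C : colimit.ι (dgm F W) ((connInMap (leOfHom h)).op.obj j) ≫
        colimit.pre (dgm F U) (connInMap (leOfHom h')).op =
        colimit.ι (dgm F U) ((connInMap (leOfHom h')).op.obj ((connInMap (leOfHom h)).op.obj j)) :=
      colimit.ι_pre (dgm F U) (connInMap (leOfHom h')).op _
    exact A.trans (C.symm.trans ((congrArg (fun k => k ≫ colimit.pre (dgm F U)
      (connInMap (leOfHom h')).op) B).symm.trans (Category.assoc _ _ _)))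



variable {X : TopCat.{u}}

/-- A precosheaf (of abelian groups) on `X` is a covariant functor on open subsets. -/
abbrev Precosheaf (X : TopCat.{u}) := Opens X ⥤ AddCommGrpCat.{u}

/-- The map `⊕_i Q(U_i) → Q(U)` for a cover `U = ⨆ U_i`, given by the corestrictions. -/
def coverSum (Q : Precosheaf X) {ι : Type u} [DecidableEq ι] (V : ι → Opens X) :
    (DirectSum ι (fun i => (Q.obj (V i) : Type u))) →+ Q.obj (⨆ i, V i) :=
  DirectSum.toAddMonoid fun i => (Q.map (homOfLE (le_iSup V i))).hom

/-- The map `⊕_{i,j} Q(U_i ∩ U_j) → ⊕_i Q(U_i)`, given on the `(i,j)` component by the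
difference of the corestrictions into the `i`-th and `j`-th summands. -/
def coverDiff (Q : Precosheaf X) {ι : Type u} [DecidableEq ι] (V : ι → Opens X) :
    (DirectSum (ι × ι) (fun p => (Q.obj (V p.1 ⊓ V p.2) : Type u))) →+ DirectSum ι (fun i => (Q.obj (V i) : Type u)) :=
  DirectSum.toAddMonoid fun p =>
    ((DirectSum.of (fun i => (Q.obj (V i) : Type u)) p.1).comp
        ((Q.map (homOfLE inf_le_left)).hom : Q.obj (V p.1 ⊓ V p.2) →+ Q.obj (V p.1))) -
    ((DirectSum.of (fun i => (Q.obj (V i) : Type u)) p.2).comp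
        ((Q.map (homOfLE inf_le_right)).hom : Q.obj (V p.1 ⊓ V p.2) →+ Q.obj (V p.2)))

/-- A precosheaf is a cosheaf if for every open cover `U = ⨆ᵢ Uᵢ` the sequence
`⊕_{i,j} Q(U_i ∩ U_j) → ⊕_i Q(U_i) → Q(U) → 0` is exact. -/
def IsCosheaf (Q : Precosheaf X) : Prop :=
  ∀ (ι : Type u) (_ : DecidableEq ι) (V : ι → Opens X),
    Function.Surjective (coverSum Q V) ∧
    AddMonoidHom.range (coverDiff Q V) = AddMonoidHom.ker (coverSum Q V)



abbrev Precosheaf' (X : TopCat.{u}) := Opens X ⥤ AddCommGrpCat.{u}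

/-- The constant cosheaf `G^cos`, with `G^cos(U) = G^{⊕ π₀(U)}`. -/
def constCoshv (X : TopCat.{u}) (G : AddCommGrpCat.{u}) : Precosheaf' X where
  obj U := AddCommGrpCat.of (DirectSum (ConnectedComponents U) (fun _ => (G : Type u)))
  map {V U} h :=
    letI := Classical.decEq (ConnectedComponents V)
    letI := Classical.decEq (ConnectedComponents U)
    AddCommGrpCat.ofHom (DirectSum.toAddMonoid fun c =>
      DirectSum.of (fun _ : ConnectedComponents U => (G : Type u))
        ((continuous_inclusion h.le).connectedComponentsMap c))
  map_id U := by
    letI := Classical.decEq (ConnectedComponents U)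
    ext1
    refine DirectSum.addHom_ext fun c g => ?_
    obtain ⟨x, rfl⟩ := ConnectedComponents.surjective_coe c
    simp [Continuous.connectedComponentsMap]
  map_comp {V W U} h h' := by
    letI := Classical.decEq (ConnectedComponents V)
    ext1
    refine DirectSum.addHom_ext fun c g => ?_
    obtain ⟨x, rfl⟩ := ConnectedComponents.surjective_coe c
    simp [Continuous.connectedComponentsMap, AddCommGrpCat.ofHom, DirectSum.toAddMonoid_of]


namespace CoshvAdj

attribute [local instance] Classical.decEq

variable {X : TopCat.{u}} [LocallyConnectedSpace X]

instance (U : Opens X) : LocallyConnectedSpace (U : Opens X) :=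
  U.isOpen.locallyConnectedSpace

instance (U : Opens X) : LocallyConnectedSpace ((U : Set X) : Type u) :=
  U.isOpen.locallyConnectedSpace

lemma cc_subsingleton (α : Type u) [TopologicalSpace α] [ConnectedSpace α] :
    Subsingleton (ConnectedComponents α) := by
  constructor
  intro a b
  obtain ⟨x, rfl⟩ := ConnectedComponents.surjective_coe a
  obtain ⟨y, rfl⟩ := ConnectedComponents.surjective_coe b
  rw [ConnectedComponents.coe_eq_coe, PreconnectedSpace.connectedComponent_eq_univ,
    PreconnectedSpace.connectedComponent_eq_univ]

/-- The connected component `c` of an open `U`, as an open subset of `X`. -/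
def compOpen (U : Opens X) (c : ConnectedComponents (U : Opens X)) : Opens X :=
  ⟨Subtype.val '' (ConnectedComponents.mk ⁻¹' {c} : Set (U : Opens X)), by
    apply U.isOpen.isOpenEmbedding_subtypeVal.isOpenMap
    obtain ⟨x, rfl⟩ := ConnectedComponents.surjective_coe c
    rw [connectedComponents_preimage_singleton]
    exact isOpen_connectedComponent⟩

lemma mem_compOpen {U : Opens X} {c : ConnectedComponents (U : Opens X)} {x : X} :
    x ∈ compOpen U c ↔ ∃ hx : x ∈ U, ConnectedComponents.mk (⟨x, hx⟩ : (U : Opens X)) = c := by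
  constructor
  · rintro ⟨⟨y, hy⟩, hyc, rfl⟩
    exact ⟨hy, hyc⟩
  · rintro ⟨hx, hc⟩
    exact ⟨⟨x, hx⟩, hc, rfl⟩

lemma compOpen_le (U : Opens X) (c : ConnectedComponents (U : Opens X)) : compOpen U c ≤ U := by
  rintro x hx
  exact (mem_compOpen.mp hx).1

lemma iSup_compOpen (U : Opens X) : (⨆ c, compOpen U c) = U := by
  apply le_antisymm
  · exact iSup_le fun c => compOpen_le U c
  · intro x hx
    have : x ∈ compOpen U (ConnectedComponents.mk (⟨x, hx⟩ : (U : Opens X))) :=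
      mem_compOpen.mpr ⟨hx, rfl⟩
    exact Opens.mem_iSup.mpr ⟨_, this⟩

lemma isConnected_compOpen (U : Opens X) (c : ConnectedComponents (U : Opens X)) :
    IsConnected ((compOpen U c : Opens X) : Set X) := by
  obtain ⟨x, rfl⟩ := ConnectedComponents.surjective_coe c
  have : ((compOpen U (ConnectedComponents.mk x) : Opens X) : Set X)
      = Subtype.val '' connectedComponent x := by
    show Subtype.val '' _ = _
    rw [connectedComponents_preimage_singleton]
  rw [this]
  exact (isConnected_connectedComponent).image _ continuous_subtype_val.continuousOn

lemma compOpen_disjoint (U : Opens X) {i j : ConnectedComponents (U : Opens X)} (h : i ≠ j) :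
    compOpen U i ⊓ compOpen U j = ⊥ := by
  apply le_bot_iff.mp
  rintro x ⟨hxi, hxj⟩
  obtain ⟨hx, hci⟩ := mem_compOpen.mp hxi
  obtain ⟨hx', hcj⟩ := mem_compOpen.mp hxj
  exact absurd (hci.symm.trans hcj) h

lemma compOpen_mono {V U : Opens X} (h : V ≤ U) (c : ConnectedComponents (V : Opens X)) :
    compOpen V c ≤ compOpen U ((continuous_inclusion h).connectedComponentsMap c) := by
  intro x hx
  obtain ⟨hxV, hc⟩ := mem_compOpen.mp hx
  refine mem_compOpen.mpr ⟨h hxV, ?_⟩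
  rw [← hc]
  rfl

variable (Q : Precosheaf' X)

lemma Qmap_eq {A B : Opens X} (f g : A ⟶ B) (x : Q.obj A) : Q.map f x = Q.map g x := by
  rw [Subsingleton.elim f g]

lemma Qmap_map {A B C : Opens X} (f : A ⟶ B) (g : B ⟶ C) (x : Q.obj A) :
    Q.map g (Q.map f x) = Q.map (f ≫ g) x := by
  rw [Q.map_comp]
  rfl

lemma Q_bot_eq_zero (hQ : IsCosheaf Q) (x : Q.obj (⊥ : Opens X)) : x = 0 := by
  obtain ⟨hs, -⟩ := hQ PEmpty.{u + 1} (Classical.decEq _) (fun i => PEmpty.elim i)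
  have e : (⨆ i : PEmpty.{u + 1}, (fun i => PEmpty.elim i) i) = (⊥ : Opens X) := iSup_of_empty _
  have hz : ∀ y : Q.obj (⨆ i : PEmpty.{u + 1}, (fun i => PEmpty.elim i) i), y = 0 := by
    intro y
    obtain ⟨d, rfl⟩ := hs y
    rw [Subsingleton.elim d 0, map_zero]
  calc x = Q.map (eqToHom e.symm ≫ eqToHom e) x := by
          rw [eqToHom_trans, eqToHom_refl, Q.map_id]; rfl
    _ = Q.map (eqToHom e) (Q.map (eqToHom e.symm) x) := (Qmap_map Q _ _ x).symm
    _ = 0 := by rw [hz (Q.map (eqToHom e.symm) x), map_zero]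

lemma Q_eq_zero_of_eq_bot (hQ : IsCosheaf Q) {W : Opens X} (hW : W = ⊥) (x : Q.obj W) :
    x = 0 := by
  subst hW
  exact Q_bot_eq_zero Q hQ x

variable (G : AddCommGrpCat.{u})

/-- The codiagonal `⊕_{π₀ U} G → G`. -/
def codiag (U : Opens X) :
    DirectSum (ConnectedComponents (U : Opens X)) (fun _ => (G : Type u)) →+ G :=
  DirectSum.toAddMonoid fun _ => AddMonoidHom.id G

lemma codiag_of (U : Opens X)
    (c : ConnectedComponents (U : Opens X)) (g : G) :
    codiag G U (DirectSum.of _ c g) = g :=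
  DirectSum.toAddMonoid_of _ _ _

lemma constMap_of {V U : Opens X} (h : V ⟶ U)
    (c : ConnectedComponents (V : Opens X)) (g : G) :
    (constCoshv X G).map h (DirectSum.of _ c g)
      = DirectSum.of (fun _ : ConnectedComponents (U : Opens X) => (G : Type u))
          ((continuous_inclusion h.le).connectedComponentsMap c) g :=
  DirectSum.toAddMonoid_of _ _ _

lemma codiag_constMap {V U : Opens X} (h : V ⟶ U)
    (d : DirectSum (ConnectedComponents (V : Opens X)) (fun _ => (G : Type u))) :
    codiag G U ((constCoshv X G).map h d) = codiag G V d := by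
  refine DFunLike.congr_fun
    (DirectSum.addHom_ext (f := (codiag G U).comp ((constCoshv X G).map h).hom)
      (g := codiag G V) fun c g => ?_) d
  show codiag G U ((constCoshv X G).map h (DirectSum.of _ c g)) = codiag G V (DirectSum.of _ c g)
  rw [constMap_of, codiag_of, codiag_of]

/-- The canonical map `⊕_c Q(U_c) → Q(U)`. -/
def sumTo (U : Opens X) :
    DirectSum (ConnectedComponents (U : Opens X)) (fun c => (Q.obj (compOpen U c) : Type u))
      →+ Q.obj U :=
  DirectSum.toAddMonoid fun c => (Q.map (homOfLE (compOpen_le U c))).hom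

lemma sumTo_of (U : Opens X)
    (c : ConnectedComponents (U : Opens X)) (q : Q.obj (compOpen U c)) :
    sumTo Q U (DirectSum.of _ c q) = Q.map (homOfLE (compOpen_le U c)) q :=
  DirectSum.toAddMonoid_of _ _ _

lemma coverSum_eq (U : Opens X)
    (d : DirectSum (ConnectedComponents (U : Opens X))
      (fun c => (Q.obj (compOpen U c) : Type u))) :
    coverSum Q (compOpen U) d = Q.map (eqToHom (iSup_compOpen U).symm) (sumTo Q U d) := by
  refine DFunLike.congr_fun
    (DirectSum.addHom_ext (f := coverSum Q (compOpen U))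
      (g := ((Q.map (eqToHom (iSup_compOpen U).symm)).hom.comp (sumTo Q U)))
      fun c q => ?_) d
  show coverSum Q (compOpen U) (DirectSum.of _ c q)
      = Q.map (eqToHom (iSup_compOpen U).symm) (sumTo Q U (DirectSum.of _ c q))
  rw [sumTo_of]
  unfold coverSum
  rw [DirectSum.toAddMonoid_of]
  show Q.map (homOfLE (le_iSup (compOpen U) c)) q = _
  rw [Qmap_map]
  exact Qmap_eq Q _ _ q

lemma sumTo_surjective (hQ : IsCosheaf Q) (U : Opens X) :
    Function.Surjective (sumTo Q U) := by
  obtain ⟨hs, -⟩ := hQ _ inferInstance (compOpen U)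
  intro x
  obtain ⟨d, hd⟩ := hs (Q.map (eqToHom (iSup_compOpen U).symm) x)
  refine ⟨d, ?_⟩
  have h1 := (coverSum_eq Q U d).symm.trans hd
  have h2 := congrArg (Q.map (eqToHom (iSup_compOpen U))) h1
  rw [Qmap_map, Qmap_map, eqToHom_trans, eqToHom_refl, Q.map_id] at h2
  exact h2

variable (φ : Q.obj (⊤ : Opens X) →+ G)

/-- The local form of `φ`. -/
def psi (U : Opens X) :
    DirectSum (ConnectedComponents (U : Opens X)) (fun c => (Q.obj (compOpen U c) : Type u))
      →+ DirectSum (ConnectedComponents (U : Opens X)) (fun _ => (G : Type u)) :=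
  DirectSum.toAddMonoid fun c =>
    (DirectSum.of (fun _ : ConnectedComponents (U : Opens X) => (G : Type u)) c).comp
      (φ.comp (Q.map (homOfLE (le_top : compOpen U c ≤ ⊤))).hom)

lemma psi_of (U : Opens X)
    (c : ConnectedComponents (U : Opens X)) (q : Q.obj (compOpen U c)) :
    psi Q G φ U (DirectSum.of _ c q)
      = DirectSum.of (fun _ : ConnectedComponents (U : Opens X) => (G : Type u)) c
          (φ (Q.map (homOfLE le_top) q)) := by
  unfold psi
  rw [DirectSum.toAddMonoid_of]
  rfl

lemma psi_coverDiff (hQ : IsCosheaf Q) (U : Opens X)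
    (d : DirectSum ((ConnectedComponents (U : Opens X)) × (ConnectedComponents (U : Opens X)))
      (fun p => (Q.obj (compOpen U p.1 ⊓ compOpen U p.2) : Type u))) :
    psi Q G φ U (coverDiff Q (compOpen U) d) = 0 := by
  refine DFunLike.congr_fun
    (DirectSum.addHom_ext (f := (psi Q G φ U).comp (coverDiff Q (compOpen U))) (g := 0)
      fun p x => ?_) d
  show psi Q G φ U (coverDiff Q (compOpen U) (DirectSum.of _ p x)) = 0
  by_cases hp : p.1 = p.2
  · unfold coverDiff
    rw [DirectSum.toAddMonoid_of]
    show psi Q G φ U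
      (DirectSum.of _ p.1 (Q.map (homOfLE inf_le_left) x)
        - DirectSum.of _ p.2 (Q.map (homOfLE inf_le_right) x)) = 0
    obtain ⟨i, j⟩ := p
    cases hp
    rw [Qmap_eq Q (homOfLE inf_le_left) (homOfLE inf_le_right) x, sub_self, map_zero]
  · have hx : x = 0 := Q_eq_zero_of_eq_bot Q hQ (compOpen_disjoint U hp) x
    rw [hx, map_zero, map_zero, map_zero]

lemma sumTo_ker_le (hQ : IsCosheaf Q) (U : Opens X) :
    (sumTo Q U).ker ≤ (psi Q G φ U).ker := by
  intro d hd
  rw [AddMonoidHom.mem_ker] at hd ⊢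
  obtain ⟨-, hk⟩ := hQ _ inferInstance (compOpen U)
  have hd' : coverSum Q (compOpen U) d = 0 := by
    rw [coverSum_eq Q U d, hd, map_zero]
  have hmem : d ∈ (coverSum Q (compOpen U)).ker := AddMonoidHom.mem_ker.mpr hd'
  rw [← hk] at hmem
  obtain ⟨e, rfl⟩ := hmem
  exact psi_coverDiff Q G φ hQ U e

/-- The component at `U` of the natural transformation `Q ⟶ G^cos` attached to `φ`. -/
def etaApp (hQ : IsCosheaf Q) (U : Opens X) :
    (Q.obj U : Type u) →+ DirectSum (ConnectedComponents (U : Opens X)) (fun _ => (G : Type u)) :=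
  (sumTo Q U).liftOfSurjective (sumTo_surjective Q hQ U) ⟨psi Q G φ U, sumTo_ker_le Q G φ hQ U⟩

lemma etaApp_sumTo (hQ : IsCosheaf Q) (U : Opens X)
    (d : DirectSum (ConnectedComponents (U : Opens X))
      (fun c => (Q.obj (compOpen U c) : Type u))) :
    etaApp Q G φ hQ U (sumTo Q U d) = psi Q G φ U d :=
  (sumTo Q U).liftOfRightInverse_comp_apply _ _ _ d

lemma codiag_psi (U : Opens X)
    (d : DirectSum (ConnectedComponents (U : Opens X))
      (fun c => (Q.obj (compOpen U c) : Type u))) :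
    codiag G U (psi Q G φ U d) = φ (Q.map (homOfLE le_top) (sumTo Q U d)) := by
  refine DFunLike.congr_fun
    (DirectSum.addHom_ext (f := (codiag G U).comp (psi Q G φ U))
      (g := φ.comp (((Q.map (homOfLE (le_top : U ≤ ⊤))).hom).comp (sumTo Q U)))
      fun c q => ?_) d
  show codiag G U (psi Q G φ U (DirectSum.of _ c q))
      = φ (Q.map (homOfLE le_top) (sumTo Q U (DirectSum.of _ c q)))
  rw [psi_of, codiag_of, sumTo_of, Qmap_map]
  exact congrArg φ (Qmap_eq Q _ _ q)

lemma directSum_eq_of {ι : Type u} [Subsingleton ι] (c₀ : ι)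
    (d : DirectSum ι (fun _ => (G : Type u))) :
    d = DirectSum.of (fun _ : ι => (G : Type u)) c₀
        ((DirectSum.toAddMonoid fun _ : ι => AddMonoidHom.id (G : Type u)) d) := by
  induction d using DirectSum.induction_on with
  | zero => simp
  | of i g =>
      rw [Subsingleton.elim c₀ i, DirectSum.toAddMonoid_of]
      rfl
  | add x y hx hy =>
      rw [map_add, map_add, ← hx, ← hy]

/-- Master lemma: any natural transformation `η : Q ⟶ G^cos` is determined on components by
its codiagonal at `⊤`. -/
lemma master (η : Q ⟶ constCoshv X G) (U : Opens X)
    (c : ConnectedComponents (U : Opens X)) (q : Q.obj (compOpen U c)) :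
    (η.app U).hom (Q.map (homOfLE (compOpen_le U c)) q)
      = DirectSum.of (fun _ : ConnectedComponents (U : Opens X) => (G : Type u)) c
          (codiag G ⊤ ((η.app ⊤).hom
            (Q.map (homOfLE le_top) q))) := by
  haveI : ConnectedSpace (((compOpen U c : Opens X)) : Type u) :=
    Subtype.connectedSpace (isConnected_compOpen U c)
  haveI := cc_subsingleton (((compOpen U c : Opens X)) : Type u)
  obtain ⟨z, hz, hzc⟩ : ∃ (z : X) (hz : z ∈ compOpen U c),
      ConnectedComponents.mk (⟨z, compOpen_le U c hz⟩ : (U : Opens X)) = c := by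
    obtain ⟨z, hz⟩ := (isConnected_compOpen U c).nonempty
    obtain ⟨hz', hc⟩ := mem_compOpen.mp hz
    exact ⟨z, hz, hc⟩
  have h1 : (η.app U) (Q.map (homOfLE (compOpen_le U c)) q)
      = (constCoshv X G).map (homOfLE (compOpen_le U c)) ((η.app (compOpen U c)) q) :=
    ConcreteCategory.congr_hom (η.naturality (homOfLE (compOpen_le U c))) q
  have h2 : (η.app ⊤) (Q.map (homOfLE le_top) q)
      = (constCoshv X G).map (homOfLE le_top) ((η.app (compOpen U c)) q) :=
    ConcreteCategory.congr_hom (η.naturality (homOfLE (le_top : compOpen U c ≤ ⊤))) q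
  have h3 : codiag G ⊤ ((η.app ⊤) (Q.map (homOfLE le_top) q))
      = codiag G (compOpen U c) ((η.app (compOpen U c)) q) := by
    rw [h2]; exact codiag_constMap G _ _
  rw [h1, h3]
  have h4 : ((η.app (compOpen U c)) q :
        DirectSum (ConnectedComponents ((compOpen U c : Opens X))) (fun _ => (G : Type u)))
      = DirectSum.of (fun _ : ConnectedComponents ((compOpen U c : Opens X)) => (G : Type u))
          (ConnectedComponents.mk (⟨z, hz⟩ : ((compOpen U c : Opens X))))
          (codiag G (compOpen U c) ((η.app (compOpen U c)) q)) :=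
    directSum_eq_of G _ _
  conv_lhs => rw [h4]
  rw [constMap_of]
  have h5 : (continuous_inclusion (homOfLE (compOpen_le U c)).le).connectedComponentsMap
      (ConnectedComponents.mk (⟨z, hz⟩ : ((compOpen U c : Opens X))))
      = ConnectedComponents.mk (⟨z, compOpen_le U c hz⟩ : (U : Opens X)) := rfl
  rw [h5, hzc]

/-- `η.app U` composed with `sumTo` is `psi` of the codiagonal of `η` at `⊤`. -/
lemma eta_comp_sumTo (η : Q ⟶ constCoshv X G) (U : Opens X)
    (d : DirectSum (ConnectedComponents (U : Opens X))
      (fun c => (Q.obj (compOpen U c) : Type u))) :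
    (η.app U).hom (sumTo Q U d)
      = psi Q G ((codiag G ⊤).comp
          (η.app ⊤).hom) U d := by
  refine DFunLike.congr_fun
    (DirectSum.addHom_ext
      (f := ((η.app U).hom).comp (sumTo Q U))
      (g := psi Q G ((codiag G ⊤).comp
        (η.app ⊤).hom) U)
      fun c q => ?_) d
  show (η.app U) (sumTo Q U (DirectSum.of _ c q)) = psi Q G _ U (DirectSum.of _ c q)
  rw [sumTo_of, psi_of, master Q G η U c q]
  rfl

/-- The natural transformation attached to `φ : Q(X) → G`. -/
def etaNat (hQ : IsCosheaf Q) : Q ⟶ constCoshv X G where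
  app U := AddCommGrpCat.ofHom (etaApp Q G φ hQ U)
  naturality {V U} h := by
    apply AddCommGrpCat.hom_ext
    refine (AddMonoidHom.cancel_right (sumTo_surjective Q hQ V)).mp ?_
    refine DirectSum.addHom_ext fun c q => ?_
    show etaApp Q G φ hQ U (Q.map h (sumTo Q V (DirectSum.of _ c q)))
        = (constCoshv X G).map h (etaApp Q G φ hQ V (sumTo Q V (DirectSum.of _ c q)))
    set c' := (continuous_inclusion h.le).connectedComponentsMap c with hc'
    have lhs1 : Q.map h (sumTo Q V (DirectSum.of _ c q))
        = sumTo Q U (DirectSum.of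
            (fun c => (Q.obj (compOpen U c) : Type u)) c'
            (Q.map (homOfLE (compOpen_mono h.le c)) q)) := by
      rw [sumTo_of, sumTo_of, Qmap_map, Qmap_map]
      exact Qmap_eq Q _ _ q
    rw [lhs1, etaApp_sumTo, psi_of, etaApp_sumTo, psi_of, constMap_of, Qmap_map]
    rw [Qmap_eq Q ((homOfLE (compOpen_mono h.le c)) ≫ homOfLE le_top) (homOfLE le_top) q]

end CoshvAdj


/-- For a locally connected space `X`, any cosheaf `Q` on `X`, and any abelian
group `G`, the canonical map `Hom_Coshv(Q, G^cos) → Hom_Ab(Q(X), G)` (evaluate at `X` and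
compose with the codiagonal `G^{⊕π₀(X)} → G`) is bijective; i.e. the constant-cosheaf functor
`G ↦ G^cos` is right adjoint to the global-sections functor `Q ↦ Q(X)` on cosheaves. -/
theorem coshv_const_adjunction (X : TopCat.{u}) [LocallyConnectedSpace X]
    (Q : Precosheaf' X) (hQ : IsCosheaf Q) (G : AddCommGrpCat.{u})
    [DecidableEq (ConnectedComponents (⊤ : Opens X))] :
    Function.Bijective (fun η : Q ⟶ constCoshv X G =>
      (DirectSum.toAddMonoid (fun _ : ConnectedComponents (⊤ : Opens X) =>
          AddMonoidHom.id (G : Type u))).comp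
        ((η.app ⊤).hom : Q.obj ⊤ →+ (constCoshv X G).obj ⊤)) := by
  have hT : (DirectSum.toAddMonoid (fun _ : ConnectedComponents (⊤ : Opens X) =>
      AddMonoidHom.id (G : Type u))) = CoshvAdj.codiag G ⊤ := by
    unfold CoshvAdj.codiag
    congr 1
    exact Subsingleton.elim _ _
  simp only [hT]
  constructor
  · intro η₁ η₂ h
    have hφ : (CoshvAdj.codiag G ⊤).comp (η₁.app ⊤).hom
        = (CoshvAdj.codiag G ⊤).comp (η₂.app ⊤).hom := h
    ext U x
    obtain ⟨d, rfl⟩ := CoshvAdj.sumTo_surjective Q hQ U x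
    exact (CoshvAdj.eta_comp_sumTo Q G η₁ U d).trans
      ((congrArg (fun ψ => CoshvAdj.psi Q G ψ U d) hφ).trans
        (CoshvAdj.eta_comp_sumTo Q G η₂ U d).symm)
  · intro φ
    refine ⟨CoshvAdj.etaNat Q G φ hQ, ?_⟩
    refine AddMonoidHom.ext fun x => ?_
    obtain ⟨d, rfl⟩ := CoshvAdj.sumTo_surjective Q hQ ⊤ x
    show CoshvAdj.codiag G ⊤ (CoshvAdj.etaApp Q G φ hQ ⊤ (CoshvAdj.sumTo Q ⊤ d))
        = φ (CoshvAdj.sumTo Q ⊤ d)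
    rw [CoshvAdj.etaApp_sumTo, CoshvAdj.codiag_psi]
    have h1 : Q.map (homOfLE le_top) (CoshvAdj.sumTo Q ⊤ d) = CoshvAdj.sumTo Q ⊤ d := by
      rw [CoshvAdj.Qmap_eq Q _ (𝟙 (⊤ : Opens X)), Q.map_id]
      rfl
    rw [h1]

end
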